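/- Let X be a measurable space, let 𝒫₀ and 𝒫₁ be nonempty sets of probability measures on X, and let α ∈ (0,1). Let (φₙ) be a sequence of measurable functions φₙ : Xⁿ → [0,1] satisfying, for every n, sup over P₀ ∈ 𝒫₀ of ∫ φₙ d(P₀^{⊗n}) ≤ α. Then inf over P₁ ∈ 𝒫₁ of limsup_{n→∞} −(1/n)·log ∫ (1−φₙ) d(P₁^{⊗n}) ≤ inf over (P₀,P₁) ∈ 𝒫₀ × 𝒫₁ of D(P₀‖P₁), where both sides are valued in [0,∞]. -/

import Mathlib

open MeasureTheory Filter
open scoped ENNReal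

/- Kullback–Leibler divergence `D(P‖Q)`, valued in `[0,∞]`: it is
`∫ log(dP/dQ) dP` when `P ≪ Q` (and the integrand is `P`-integrable), and `∞` otherwise. -/
open scoped Classical in
noncomputable def klDiv {X : Type*} [MeasurableSpace X] (P Q : Measure X) : ℝ≥0∞ :=
  if P ≪ Q ∧ MeasureTheory.Integrable (fun x => Real.log (P.rnDeriv Q x).toReal) P
  then ENNReal.ofReal (∫ x, Real.log (P.rnDeriv Q x).toReal ∂P) else ⊤

/- `−(1/n)·log β`, valued in `[0,∞]`, with the convention that it is `∞` when `β = 0`. -/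
open scoped Classical in
noncomputable def negLogRate (n : ℕ) (β : ℝ) : ℝ≥0∞ :=
  if β = 0 then ⊤ else ENNReal.ofReal (-(1 / (n : ℝ)) * Real.log β)

open scoped Topology

section helpers
variable {X : Type*} [MeasurableSpace X]

lemma measurePreserving_eval_pi {n : ℕ} (μ : Measure X) [IsProbabilityMeasure μ] (i : Fin n) :
    MeasurePreserving (fun x : Fin n → X => x i) (Measure.pi fun _ : Fin n => μ) μ := by
  classical
  refine ⟨measurable_pi_apply i, ?_⟩
  ext s hs
  rw [Measure.map_apply (measurable_pi_apply i) hs]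
  have h1 : (fun x : Fin n → X => x i) ⁻¹' s
      = Set.pi Set.univ (Function.update (fun _ : Fin n => Set.univ) i s) :=
    Set.eval_preimage
  rw [h1, Measure.pi_pi, Finset.prod_eq_single i]
  · rw [Function.update_self]
  · intro j _ hj
    rw [Function.update_of_ne hj]
    simp
  · simp

lemma integrable_eval_pi {n : ℕ} {μ : Measure X} [IsProbabilityMeasure μ] {i : Fin n} {f : X → ℝ}
    (hf : Integrable f μ) :
    Integrable (fun x : Fin n → X => f (x i)) (Measure.pi fun _ : Fin n => μ) :=
  ((measurePreserving_eval_pi μ i).integrable_comp hf.aestronglyMeasurable).mpr hf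

lemma integral_eval_pi {n : ℕ} {μ : Measure X} [IsProbabilityMeasure μ] {i : Fin n} {f : X → ℝ}
    (hf : AEStronglyMeasurable f μ) :
    ∫ x : Fin n → X, f (x i) ∂(Measure.pi fun _ : Fin n => μ) = ∫ y, f y ∂μ := by
  conv_rhs => rw [← (measurePreserving_eval_pi μ i).map_eq]
  rw [integral_map (measurable_pi_apply i).aemeasurable
    ((measurePreserving_eval_pi μ i).map_eq.symm ▸ hf)]

lemma integral_pi_prod {n : ℕ} (μ : Measure X) [IsProbabilityMeasure μ] (F : Fin n → X → ℝ) :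
    ∫ x : Fin n → X, ∏ i, F i (x i) ∂(Measure.pi fun _ : Fin n => μ) = ∏ i, ∫ y, F i y ∂μ := by
  letI : MeasureSpace X := ⟨μ⟩
  haveI : SigmaFinite (volume : Measure X) := (inferInstance : SigmaFinite μ)
  exact MeasureTheory.integral_fin_nat_prod_eq_prod F


lemma integral_sq_sum {n : ℕ} (μ : Measure X) [IsProbabilityMeasure μ] {h : X → ℝ}
    (hm : Measurable h) {C : ℝ} (hC0 : 0 ≤ C) (hb : ∀ x, |h x| ≤ C) (h0 : ∫ y, h y ∂μ = 0) :
    ∫ x : Fin n → X, (∑ i, h (x i)) ^ 2 ∂(Measure.pi fun _ : Fin n => μ)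
      = n * ∫ y, h y ^ 2 ∂μ := by
  classical
  have hint : ∀ i j : Fin n,
      Integrable (fun x : Fin n → X => h (x i) * h (x j)) (Measure.pi fun _ : Fin n => μ) := by
    intro i j
    refine Integrable.mono' (integrable_const (C * C))
      (((hm.comp (measurable_pi_apply i)).mul (hm.comp (measurable_pi_apply j))).aestronglyMeasurable)
      (Filter.Eventually.of_forall fun x => ?_)
    rw [Real.norm_eq_abs, abs_mul]
    exact mul_le_mul (hb _) (hb _) (abs_nonneg _) hC0
  have hoff : ∀ i j : Fin n, j ≠ i →
      ∫ x : Fin n → X, h (x i) * h (x j) ∂(Measure.pi fun _ : Fin n => μ) = 0 := by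
    intro i j hij
    have hfun : (fun x : Fin n → X => h (x i) * h (x j))
        = fun x => ∏ l, (if l = i ∨ l = j then h else fun _ => (1:ℝ)) (x l) := by
      funext x
      rw [← Finset.prod_subset (Finset.subset_univ ({i, j} : Finset (Fin n)))
        (fun l _ hl => ?_)]
      · rw [Finset.prod_pair (Ne.symm hij)]
        simp
      · have hl' : ¬(l = i ∨ l = j) := by
          simpa [Finset.mem_insert, Finset.mem_singleton] using hl
        simp [hl']
    rw [hfun, integral_pi_prod]
    refine Finset.prod_eq_zero (Finset.mem_univ i) ?_
    simp [h0]
  have hdiag : ∀ i : Fin n,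
      ∫ x : Fin n → X, h (x i) * h (x i) ∂(Measure.pi fun _ : Fin n => μ) = ∫ y, h y ^ 2 ∂μ := by
    intro i
    rw [show (fun x : Fin n → X => h (x i) * h (x i)) = fun x => (fun y => h y ^ 2) (x i) by
      funext x; ring]
    exact integral_eval_pi ((hm.pow_const 2).aestronglyMeasurable)
  have hexp : ∀ x : Fin n → X, (∑ i, h (x i)) ^ 2 = ∑ i, ∑ j, h (x i) * h (x j) := by
    intro x
    rw [sq, Finset.sum_mul_sum]
  simp_rw [hexp]
  rw [integral_finset_sum _ (fun i _ => integrable_finset_sum _ (fun j _ => hint i j))]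
  have : ∀ i : Fin n, ∫ x : Fin n → X, ∑ j, h (x i) * h (x j) ∂(Measure.pi fun _ : Fin n => μ)
      = ∫ y, h y ^ 2 ∂μ := by
    intro i
    rw [integral_finset_sum _ (fun j _ => hint i j)]
    rw [Finset.sum_eq_single_of_mem i (Finset.mem_univ i) (fun j _ hj => hoff i j hj)]
    exact hdiag i
  simp_rw [this, Finset.sum_const, Finset.card_univ, Fintype.card_fin, nsmul_eq_mul]

lemma exists_bounded_approx (μ : Measure X) [IsProbabilityMeasure μ] {f : X → ℝ}
    (hm : Measurable f) (hf : Integrable f μ) {δ : ℝ} (hδ : 0 < δ) :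
    ∃ g : X → ℝ, Measurable g ∧ (∃ C : ℝ, 0 ≤ C ∧ ∀ x, |g x| ≤ C) ∧ ∫ y, |f y - g y| ∂μ < δ := by
  set g : ℕ → X → ℝ := fun M x => max (min (f x) M) (-(M:ℝ)) with hg
  have hgm : ∀ M, Measurable (g M) := fun M => (hm.min measurable_const).max measurable_const
  have hgb : ∀ M x, |g M x| ≤ M := by
    intro M x
    rw [abs_le]
    constructor
    · exact le_max_right _ _
    · exact max_le (le_trans (min_le_right _ _) le_rfl)
        (neg_le_self (Nat.cast_nonneg M))
  have hgf : ∀ M x, |g M x| ≤ |f x| := by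
    intro M x
    rw [abs_le]
    constructor
    · rcases le_or_gt 0 (f x) with hfx | hfx
      · have h1 : (0:ℝ) ≤ min (f x) M := le_min hfx (Nat.cast_nonneg M)
        have h2 : -|f x| ≤ (0:ℝ) := neg_nonpos.mpr (abs_nonneg _)
        exact le_trans (le_trans h2 h1) (le_max_left _ _)
      · have h1 : -|f x| = f x := by rw [abs_of_neg hfx]; ring
        rw [h1]
        exact le_trans (le_min le_rfl (le_trans hfx.le (Nat.cast_nonneg M)))
          (le_max_left _ _)
    · refine max_le (le_trans (min_le_left _ _) (le_abs_self _)) ?_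
      exact le_trans (neg_nonpos.mpr (Nat.cast_nonneg M)) (abs_nonneg _)
  have htend : Tendsto (fun M => ∫ y, |f y - g M y| ∂μ) atTop (𝓝 (∫ y, (0:ℝ) ∂μ)) := by
    refine tendsto_integral_of_dominated_convergence (fun y => 2 * |f y|)
      (fun M => ((hm.sub (hgm M)).abs).aestronglyMeasurable)
      (hf.abs.const_mul 2) (fun M => Filter.Eventually.of_forall fun y => ?_)
      (Filter.Eventually.of_forall fun y => ?_)
    · rw [Real.norm_eq_abs, abs_abs]
      calc |f y - g M y| ≤ |f y| + |g M y| := abs_sub _ _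
        _ ≤ 2 * |f y| := by linarith [hgf M y]
    · have hev : ∀ᶠ M : ℕ in atTop, |f y - g M y| = 0 := by
        filter_upwards [eventually_ge_atTop ⌈|f y|⌉₊] with M hM
        have hM' : |f y| ≤ (M:ℝ) := le_trans (Nat.le_ceil _) (Nat.cast_le.mpr hM)
        have h1 : f y ≤ (M:ℝ) := le_trans (le_abs_self _) hM'
        have h2 : -(M:ℝ) ≤ f y := by
          have := neg_abs_le (f y); linarith
        simp only [hg, min_eq_left h1, max_eq_left h2, sub_self, abs_zero]
      exact Tendsto.congr' (by filter_upwards [hev] with M hM using hM.symm) tendsto_const_nhds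
  rw [integral_zero] at htend
  have := (htend.eventually (gt_mem_nhds hδ)).exists
  obtain ⟨M, hM⟩ := this
  exact ⟨g M, hgm M, ⟨M, Nat.cast_nonneg M, hgb M⟩, hM⟩


lemma wlln_event (μ : Measure X) [IsProbabilityMeasure μ] {f : X → ℝ}
    (hm : Measurable f) (hf : Integrable f μ) {ε δ' : ℝ} (hε : 0 < ε) (hδ' : 0 < δ') :
    ∀ᶠ n : ℕ in atTop,
      ((Measure.pi fun _ : Fin n => μ)
        {x | (n:ℝ) * (∫ y, f y ∂μ) + n * ε ≤ ∑ i, f (x i)}).toReal ≤ δ' := by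
  have hδpos : 0 < ε * δ' / 16 := by positivity
  obtain ⟨v, hvm, ⟨C, hC0, hvC⟩, huδ⟩ := exists_bounded_approx μ hm hf hδpos
  set δ : ℝ := ε * δ' / 16 with hδdef
  set m : ℝ := ∫ y, f y ∂μ with hm_def
  have hvint : Integrable v μ :=
    Integrable.mono' (integrable_const C) hvm.aestronglyMeasurable
      (Filter.Eventually.of_forall fun x => by rw [Real.norm_eq_abs]; exact hvC x)
  set u : X → ℝ := fun x => f x - v x with hu_def
  have huint : Integrable u μ := hf.sub hvint
  set Eu : ℝ := ∫ y, u y ∂μ with hEu_def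
  set Ev : ℝ := ∫ y, v y ∂μ with hEv_def
  have hmEuv : m = Eu + Ev := by
    rw [hEu_def, hEv_def, integral_sub hf hvint]; ring
  have habsu : ∫ y, |u y| ∂μ < δ := huδ
  have hEuabs : |Eu| ≤ δ := by
    calc |Eu| ≤ ∫ y, |u y| ∂μ := by
          simpa [Real.norm_eq_abs] using norm_integral_le_integral_norm (μ := μ) u
      _ ≤ δ := habsu.le
  set h : X → ℝ := fun x => v x - Ev with hh_def
  have hhm : Measurable h := hvm.sub measurable_const
  set C' : ℝ := C + |Ev| with hC'_def
  have hC'0 : 0 ≤ C' := by positivity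
  have hhb : ∀ x, |h x| ≤ C' := by
    intro x
    calc |h x| ≤ |v x| + |Ev| := abs_sub _ _
      _ ≤ C' := by have := hvC x; rw [hC'_def]; linarith
  have hh0 : ∫ y, h y ∂μ = 0 := by
    rw [hh_def]
    simp only []
    rw [integral_sub hvint (integrable_const Ev), integral_const]
    simp [hEv_def]
  have hhint : Integrable h μ := hvint.sub (integrable_const Ev)
  set Ih : ℝ := ∫ y, h y ^ 2 ∂μ with hIh_def
  have hIh0 : 0 ≤ Ih := integral_nonneg fun y => sq_nonneg _
  have huE : ∫ y, |u y - Eu| ∂μ ≤ 2 * δ := by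
    calc ∫ y, |u y - Eu| ∂μ ≤ ∫ y, (|u y| + |Eu|) ∂μ := by
          refine integral_mono (huint.sub (integrable_const Eu)).abs (huint.abs.add (integrable_const _)) fun y => abs_sub _ _
      _ = (∫ y, |u y| ∂μ) + |Eu| := by
          rw [integral_add huint.abs (integrable_const _), integral_const]
          simp
      _ ≤ 2 * δ := by linarith
  filter_upwards [eventually_ge_atTop (max 1 ⌈8 * Ih / (ε ^ 2 * δ')⌉₊)] with n hn
  have hn1 : 1 ≤ n := le_trans (le_max_left _ _) hn
  have hn0 : (0:ℝ) < n := by exact_mod_cast Nat.lt_of_lt_of_le Nat.zero_lt_one hn1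
  have hnIh : 8 * Ih / (ε ^ 2 * δ') ≤ (n:ℝ) := by
    refine le_trans (Nat.le_ceil _) ?_
    exact_mod_cast le_trans (le_max_right 1 _) hn
  have hnIh' : 8 * Ih ≤ (n:ℝ) * (ε ^ 2 * δ') := by
    rw [div_le_iff₀ (by positivity)] at hnIh
    linarith
  set Pn := Measure.pi fun _ : Fin n => μ with hPn_def
  haveI : IsProbabilityMeasure Pn := by rw [hPn_def]; infer_instance
  set S : Set (Fin n → X) := {x | (n:ℝ) * m + n * ε ≤ ∑ i, f (x i)} with hS_def
  set S₁ : Set (Fin n → X) := {x | (n:ℝ) * (ε / 2) ≤ ∑ i, |u (x i) - Eu|} with hS1_def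
  set S₂ : Set (Fin n → X) := {x | ((n:ℝ) * (ε / 2)) ^ 2 ≤ (∑ i, h (x i)) ^ 2} with hS2_def
  have hsub : S ⊆ S₁ ∪ S₂ := by
    intro x hx
    by_contra hcon
    have hx1 : x ∉ S₁ := fun hmem => hcon (Or.inl hmem)
    have hx2 : x ∉ S₂ := fun hmem => hcon (Or.inr hmem)
    rw [hS1_def, Set.mem_setOf_eq, not_le] at hx1
    rw [hS2_def, Set.mem_setOf_eq, not_le] at hx2
    have hx2' : ∑ i, h (x i) < (n:ℝ) * (ε / 2) := by
      by_contra hcon2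
      push_neg at hcon2
      exact absurd (pow_le_pow_left₀ (by positivity) hcon2 2) (not_le.mpr hx2)
    have hsum : ∑ i, f (x i) = (∑ i, (u (x i) - Eu)) + (∑ i, h (x i)) + n * m := by
      have : ∀ i : Fin n, f (x i) = (u (x i) - Eu) + h (x i) + m := by
        intro i
        rw [hu_def, hh_def, hmEuv]; ring
      simp_rw [this]
      rw [Finset.sum_add_distrib, Finset.sum_add_distrib, Finset.sum_const,
        Finset.card_univ, Fintype.card_fin, nsmul_eq_mul]
    have hle : ∑ i, (u (x i) - Eu) ≤ ∑ i, |u (x i) - Eu| :=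
      Finset.sum_le_sum fun i _ => le_abs_self _
    rw [hS_def, Set.mem_setOf_eq] at hx
    nlinarith
  -- Markov for S₁
  have hu_i : ∀ i : Fin n, Integrable (fun x : Fin n → X => |u (x i) - Eu|) Pn := by
    intro i
    exact integrable_eval_pi (f := fun y => |u y - Eu|) (huint.sub (integrable_const Eu)).abs
  have hS1int : Integrable (fun x : Fin n → X => ∑ i, |u (x i) - Eu|) Pn :=
    integrable_finset_sum _ fun i _ => hu_i i
  have hmar1 := mul_meas_ge_le_integral_of_nonneg
    (Filter.Eventually.of_forall fun x : Fin n → X =>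
      Finset.sum_nonneg fun i _ => abs_nonneg _)
    hS1int ((n:ℝ) * (ε / 2))
  have hint1 : ∫ x : Fin n → X, ∑ i, |u (x i) - Eu| ∂Pn ≤ (n:ℝ) * (2 * δ) := by
    rw [integral_finset_sum _ fun i _ => hu_i i]
    have : ∀ i : Fin n, ∫ x : Fin n → X, |u (x i) - Eu| ∂Pn = ∫ y, |u y - Eu| ∂μ := by
      intro i
      exact integral_eval_pi ((huint.sub (integrable_const Eu)).abs).aestronglyMeasurable
    simp_rw [this, Finset.sum_const, Finset.card_univ, Fintype.card_fin, nsmul_eq_mul]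
    exact mul_le_mul_of_nonneg_left huE (Nat.cast_nonneg n)
  have ht1 : (Pn S₁).toReal ≤ δ' / 4 := by
    have hpos : (0:ℝ) < (n:ℝ) * (ε / 2) := by positivity
    have := le_trans hmar1 hint1
    have heq : (n:ℝ) * (2 * δ) = ((n:ℝ) * (ε / 2)) * (δ' / 4) := by
      rw [hδdef]; ring
    rw [heq] at this
    exact le_of_mul_le_mul_left this hpos
  -- Chebyshev for S₂
  have hS2m : Measurable fun x : Fin n → X => (∑ i, h (x i)) ^ 2 :=
    (Finset.measurable_sum _ fun i _ => hhm.comp (measurable_pi_apply i)).pow_const 2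
  have hS2int : Integrable (fun x : Fin n → X => (∑ i, h (x i)) ^ 2) Pn := by
    refine Integrable.mono' (integrable_const (((n:ℝ) * C') ^ 2))
      hS2m.aestronglyMeasurable (Filter.Eventually.of_forall fun x => ?_)
    rw [Real.norm_eq_abs, abs_of_nonneg (sq_nonneg _)]
    have h1 : |∑ i, h (x i)| ≤ (n:ℝ) * C' := by
      calc |∑ i, h (x i)| ≤ ∑ i, |h (x i)| := Finset.abs_sum_le_sum_abs _ _
        _ ≤ ∑ _i : Fin n, C' := Finset.sum_le_sum fun i _ => hhb _
        _ = (n:ℝ) * C' := by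
            rw [Finset.sum_const, Finset.card_univ, Fintype.card_fin, nsmul_eq_mul]
    calc (∑ i, h (x i)) ^ 2 = |∑ i, h (x i)| ^ 2 := (sq_abs _).symm
      _ ≤ ((n:ℝ) * C') ^ 2 := pow_le_pow_left₀ (abs_nonneg _) h1 2
  have hmar2 := mul_meas_ge_le_integral_of_nonneg
    (Filter.Eventually.of_forall fun x : Fin n → X => sq_nonneg (∑ i, h (x i)))
    hS2int (((n:ℝ) * (ε / 2)) ^ 2)
  have hint2 : ∫ x : Fin n → X, (∑ i, h (x i)) ^ 2 ∂Pn = (n:ℝ) * Ih := by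
    rw [hPn_def]
    exact integral_sq_sum μ hhm hC'0 hhb hh0
  have ht2 : (Pn S₂).toReal ≤ δ' / 2 := by
    have hpos : (0:ℝ) < ((n:ℝ) * (ε / 2)) ^ 2 := by positivity
    rw [hint2] at hmar2
    have hkey : (n:ℝ) * Ih ≤ (((n:ℝ) * (ε / 2)) ^ 2) * (δ' / 2) := by
      have : (((n:ℝ) * (ε / 2)) ^ 2) * (δ' / 2) = (n:ℝ) * ((n:ℝ) * (ε ^ 2 * δ')) / 8 := by
        ring
      rw [this]
      have := mul_le_mul_of_nonneg_left hnIh' (le_of_lt hn0)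
      linarith
    exact le_of_mul_le_mul_left (le_trans hmar2 hkey) hpos
  calc (Pn S).toReal ≤ ((Pn S₁) + (Pn S₂)).toReal := by
        refine ENNReal.toReal_mono (ENNReal.add_ne_top.mpr ⟨measure_ne_top _ _, measure_ne_top _ _⟩) ?_
        exact le_trans (measure_mono hsub) (measure_union_le _ _)
    _ ≤ (Pn S₁).toReal + (Pn S₂).toReal := ENNReal.toReal_add_le
    _ ≤ δ' / 4 + δ' / 2 := add_le_add ht1 ht2
    _ ≤ δ' := by linarith

lemma lintegral_pi_prod {n : ℕ} (μ : Measure X) [IsProbabilityMeasure μ] {F : Fin n → X → ℝ≥0∞}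
    (hF : ∀ i, Measurable (F i)) :
    ∫⁻ x : Fin n → X, ∏ i, F i (x i) ∂(Measure.pi fun _ : Fin n => μ) = ∏ i, ∫⁻ y, F i y ∂μ := by
  induction n with
  | zero => simp [lintegral_const]
  | succ n ih =>
    have hmp := (measurePreserving_piFinSuccAbove (fun _ : Fin (n+1) => μ) 0).symm
    rw [← hmp.lintegral_comp_emb
      (MeasurableEquiv.piFinSuccAbove (fun _ : Fin (n+1) => X) 0).symm.measurableEmbedding]
    simp only [MeasurableEquiv.piFinSuccAbove_symm_apply]
    simp_rw [Fin.insertNthEquiv_zero, Fin.consEquiv_apply, Fin.prod_univ_succ, Fin.cons_zero,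
      Fin.cons_succ]
    rw [lintegral_prod_mul (f := F 0) (g := fun z : Fin n → X => ∏ j, F (Fin.succ j) (z j))
      (hF 0).aemeasurable
      (Finset.univ.measurable_prod fun j _ =>
        ((hF (Fin.succ j)).comp (measurable_pi_apply j) :
          Measurable fun z : Fin n → X => F (Fin.succ j) (z j))).aemeasurable]
    rw [ih (fun j => hF (Fin.succ j))]

lemma pi_withDensity (P₀ P₁ : Measure X) [IsProbabilityMeasure P₀] [IsProbabilityMeasure P₁]
    (hac : P₀ ≪ P₁) (n : ℕ) :
    (Measure.pi fun _ : Fin n => P₀)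
      = (Measure.pi fun _ : Fin n => P₁).withDensity (fun x => ∏ i, P₀.rnDeriv P₁ (x i)) := by
  have hr : Measurable (P₀.rnDeriv P₁) := Measure.measurable_rnDeriv _ _
  refine Measure.pi_eq (μ := fun _ : Fin n => P₀) fun s hs => ?_
  rw [withDensity_apply _ (MeasurableSet.univ_pi hs)]
  rw [← lintegral_indicator (MeasurableSet.univ_pi hs) (fun x : Fin n → X => ∏ i, P₀.rnDeriv P₁ (x i))]
  have hind : (Set.pi Set.univ s).indicator (fun x : Fin n → X => ∏ i, P₀.rnDeriv P₁ (x i))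
      = fun x => ∏ i, (s i).indicator (P₀.rnDeriv P₁) (x i) := by
    funext x
    by_cases hx : x ∈ Set.pi Set.univ s
    · rw [Set.indicator_of_mem hx]
      exact Finset.prod_congr rfl fun i _ =>
        (Set.indicator_of_mem (hx i (Set.mem_univ i)) _).symm
    · rw [Set.indicator_of_notMem hx]
      have hex : ∃ i, x i ∉ s i := by
        by_contra hcon
        push_neg at hcon
        exact hx fun i _ => hcon i
      obtain ⟨i, hi⟩ := hex
      exact (Finset.prod_eq_zero (Finset.mem_univ i) (Set.indicator_of_notMem hi _)).symm
  rw [hind]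
  beta_reduce
  rw [lintegral_pi_prod P₁ (fun i => hr.indicator (hs i))]
  refine Finset.prod_congr rfl fun i _ => ?_
  rw [lintegral_indicator (hs i)]
  exact Measure.setLIntegral_rnDeriv hac (s i)

lemma key_lb {n : ℕ} (P₀ P₁ : Measure X) [IsProbabilityMeasure P₀] [IsProbabilityMeasure P₁]
    (hac : P₀ ≪ P₁) {φ : (Fin n → X) → ℝ} (hφm : Measurable φ)
    (hφ01 : ∀ x, 0 ≤ φ x ∧ φ x ≤ 1) {α : ℝ} (hα : α ∈ Set.Ioo (0:ℝ) 1)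
    (hfa : ∫ x, φ x ∂(Measure.pi fun _ : Fin n => P₀) ≤ α) {c : ℝ}
    (hA : ((Measure.pi fun _ : Fin n => P₀)
        {x | c < ∑ i, Real.log (P₀.rnDeriv P₁ (x i)).toReal}).toReal ≤ (1 - α) / 2) :
    (1 - α) / 2 * Real.exp (-c) ≤ ∫ x, (1 - φ x) ∂(Measure.pi fun _ : Fin n => P₁) := by
  classical
  set r := P₀.rnDeriv P₁ with hr_def
  have hrm : Measurable r := Measure.measurable_rnDeriv _ _
  set l : X → ℝ := fun y => Real.log (r y).toReal with hl_def
  have hlm : Measurable l := Real.measurable_log.comp hrm.ennreal_toReal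
  set Pn0 := Measure.pi fun _ : Fin n => P₀ with hPn0
  set Pn1 := Measure.pi fun _ : Fin n => P₁ with hPn1
  haveI : IsProbabilityMeasure Pn0 := by rw [hPn0]; infer_instance
  haveI : IsProbabilityMeasure Pn1 := by rw [hPn1]; infer_instance
  set A : Set (Fin n → X) := {x | ∑ i, l (x i) ≤ c} with hA_def
  have hsm : Measurable fun x : Fin n → X => ∑ i, l (x i) :=
    Finset.measurable_sum _ fun i _ => hlm.comp (measurable_pi_apply i)
  have hAm : MeasurableSet A := measurableSet_le hsm measurable_const
  have hAc : Aᶜ = {x | c < ∑ i, l (x i)} := by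
    ext x; simp [hA_def, not_le]
  have hcompl : Pn0 Aᶜ ≤ ENNReal.ofReal ((1 - α) / 2) := by
    rw [hAc]
    exact (ENNReal.le_ofReal_iff_toReal_le (measure_ne_top _ _)
      (by linarith [hα.2])).mpr hA
  have hadd : Pn0 A + Pn0 Aᶜ = 1 := by
    rw [measure_add_measure_compl hAm]; exact measure_univ
  have hge : ENNReal.ofReal ((1 + α) / 2) ≤ Pn0 A := by
    have h1 : (1:ℝ≥0∞) ≤ Pn0 A + ENNReal.ofReal ((1 - α) / 2) := by
      rw [← hadd]; exact add_le_add_right hcompl _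
    have h2 : (1:ℝ≥0∞) - ENNReal.ofReal ((1 - α) / 2) ≤ Pn0 A := tsub_le_iff_right.mpr h1
    refine le_trans (le_of_eq ?_) h2
    rw [← ENNReal.ofReal_one, ← ENNReal.ofReal_sub _ (by linarith [hα.2] : (0:ℝ) ≤ (1 - α) / 2)]
    congr 1; ring
  set g : (Fin n → X) → ℝ≥0∞ := fun x => ENNReal.ofReal (1 - φ x) with hg_def
  have hgm : Measurable g := (measurable_const.sub hφm).ennreal_ofReal
  have hφint : Integrable φ Pn0 := by
    refine Integrable.mono' (integrable_const 1) hφm.aestronglyMeasurable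
      (Filter.Eventually.of_forall fun x => ?_)
    rw [Real.norm_eq_abs, abs_le]
    exact ⟨by linarith [(hφ01 x).1], (hφ01 x).2⟩
  have hsplit : Pn0 A ≤ (∫⁻ x in A, g x ∂Pn0) + ENNReal.ofReal α := by
    have h1 : Pn0 A = ∫⁻ _x in A, (1:ℝ≥0∞) ∂Pn0 := by rw [setLIntegral_one]
    have h2 : ∀ x, (1:ℝ≥0∞) = g x + ENNReal.ofReal (φ x) := by
      intro x
      rw [hg_def]
      simp only []
      rw [← ENNReal.ofReal_add (by linarith [(hφ01 x).2]) (hφ01 x).1]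
      norm_num
    calc Pn0 A = ∫⁻ x in A, (g x + ENNReal.ofReal (φ x)) ∂Pn0 := by
          rw [h1]; exact lintegral_congr fun x => h2 x
      _ = (∫⁻ x in A, g x ∂Pn0) + ∫⁻ x in A, ENNReal.ofReal (φ x) ∂Pn0 :=
          lintegral_add_left hgm _
      _ ≤ (∫⁻ x in A, g x ∂Pn0) + ENNReal.ofReal α := by
          refine add_le_add_right ?_ _
          calc ∫⁻ x in A, ENNReal.ofReal (φ x) ∂Pn0
              ≤ ∫⁻ x, ENNReal.ofReal (φ x) ∂Pn0 := setLIntegral_le_lintegral _ _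
            _ = ENNReal.ofReal (∫ x, φ x ∂Pn0) :=
                (ofReal_integral_eq_lintegral_ofReal hφint
                  (Filter.Eventually.of_forall fun x => (hφ01 x).1)).symm
            _ ≤ ENNReal.ofReal α := ENNReal.ofReal_le_ofReal hfa
  have hstep1 : ENNReal.ofReal ((1 - α) / 2) ≤ ∫⁻ x in A, g x ∂Pn0 := by
    have h1 : ENNReal.ofReal ((1 + α) / 2) - ENNReal.ofReal α ≤ ∫⁻ x in A, g x ∂Pn0 :=
      tsub_le_iff_right.mpr (le_trans hge hsplit)
    refine le_trans (le_of_eq ?_) h1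
    rw [← ENNReal.ofReal_sub _ hα.1.le]
    congr 1; ring
  have hRm : Measurable fun x : Fin n → X => ∏ i, r (x i) :=
    Finset.measurable_prod _ fun i _ => hrm.comp (measurable_pi_apply i)
  have hcm : ∫⁻ x in A, g x ∂Pn0 = ∫⁻ x in A, ((fun x : Fin n → X => ∏ i, r (x i)) * g) x ∂Pn1 := by
    rw [hPn0, pi_withDensity P₀ P₁ hac n,
      setLIntegral_withDensity_eq_setLIntegral_mul _ hRm hgm hAm]
  have hfin : ∀ᵐ x ∂Pn1, ∀ i, r (x i) ≠ ∞ := by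
    rw [ae_all_iff]
    intro i
    have h1 : P₁ {y | r y = ∞} = 0 := by
      have h2 := Measure.rnDeriv_lt_top P₀ P₁
      rw [ae_iff] at h2
      simpa [not_lt, top_le_iff] using h2
    have h3 : Pn1 ((fun x : Fin n → X => x i) ⁻¹' {y | r y = ∞}) = 0 :=
      Measure.pi_eval_preimage_null _ h1
    rw [ae_iff]
    simpa using h3
  have hRb : ∀ᵐ x ∂Pn1, x ∈ A → (∏ i, r (x i)) ≤ ENNReal.ofReal (Real.exp c) := by
    filter_upwards [hfin] with x hx hxA
    have h1 : (∏ i, r (x i)) = ENNReal.ofReal (∏ i, (r (x i)).toReal) := by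
      rw [ENNReal.ofReal_prod_of_nonneg (fun i _ => ENNReal.toReal_nonneg)]
      exact Finset.prod_congr rfl fun i _ => (ENNReal.ofReal_toReal (hx i)).symm
    rw [h1]
    refine ENNReal.ofReal_le_ofReal ?_
    by_cases hzero : ∃ i, (r (x i)).toReal = 0
    · obtain ⟨i, hi⟩ := hzero
      rw [Finset.prod_eq_zero (Finset.mem_univ i) hi]
      positivity
    · push_neg at hzero
      have hpos : ∀ i, 0 < (r (x i)).toReal := fun i =>
        lt_of_le_of_ne ENNReal.toReal_nonneg (Ne.symm (hzero i))
      have h2 : ∏ i, (r (x i)).toReal = Real.exp (∑ i, l (x i)) := by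
        rw [Real.exp_sum]
        exact Finset.prod_congr rfl fun i _ => (Real.exp_log (hpos i)).symm
      rw [h2]
      exact Real.exp_le_exp.mpr hxA
  have h1mφint : Integrable (fun x => 1 - φ x) Pn1 := by
    refine Integrable.mono' (integrable_const 1)
      ((measurable_const.sub hφm).aestronglyMeasurable)
      (Filter.Eventually.of_forall fun x => ?_)
    rw [Real.norm_eq_abs, abs_le]
    exact ⟨by linarith [(hφ01 x).2], by linarith [(hφ01 x).1]⟩
  have hβnn : (0:ℝ) ≤ ∫ x, (1 - φ x) ∂Pn1 :=
    integral_nonneg fun x => by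
      show (0:ℝ) ≤ 1 - φ x
      linarith [(hφ01 x).2]
  have hchain : ENNReal.ofReal ((1 - α) / 2)
      ≤ ENNReal.ofReal (Real.exp c) * ENNReal.ofReal (∫ x, (1 - φ x) ∂Pn1) := by
    calc ENNReal.ofReal ((1 - α) / 2) ≤ ∫⁻ x in A, g x ∂Pn0 := hstep1
      _ = ∫⁻ x in A, ((fun x : Fin n → X => ∏ i, r (x i)) * g) x ∂Pn1 := hcm
      _ ≤ ∫⁻ x in A, ENNReal.ofReal (Real.exp c) * g x ∂Pn1 := by
          refine lintegral_mono_ae ((ae_restrict_iff' hAm).mpr ?_)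
          filter_upwards [hRb] with x hx hxA
          exact mul_le_mul_left (hx hxA) (g x)
      _ = ENNReal.ofReal (Real.exp c) * ∫⁻ x in A, g x ∂Pn1 := lintegral_const_mul _ hgm
      _ ≤ ENNReal.ofReal (Real.exp c) * ∫⁻ x, g x ∂Pn1 :=
          mul_le_mul_right (setLIntegral_le_lintegral _ _) _
      _ = ENNReal.ofReal (Real.exp c) * ENNReal.ofReal (∫ x, (1 - φ x) ∂Pn1) := by
          rw [ofReal_integral_eq_lintegral_ofReal h1mφint
            (Filter.Eventually.of_forall fun x => by
              show (0:ℝ) ≤ 1 - φ x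
              linarith [(hφ01 x).2])]
  rw [← ENNReal.ofReal_mul (Real.exp_nonneg c)] at hchain
  have hfinal : (1 - α) / 2 ≤ Real.exp c * ∫ x, (1 - φ x) ∂Pn1 :=
    (ENNReal.ofReal_le_ofReal_iff (by positivity)).mp hchain
  rw [Real.exp_neg, ← div_eq_mul_inv, div_le_iff₀ (Real.exp_pos c)]
  linarith

end helpers

/-- Universal upper bound on the worst-case type-II error exponent (robust Chernoff–Stein):
any sequence of tests whose worst-case false alarm probability over `𝒫₀` is at most `α`
has worst-case miss-detection exponent over `𝒫₁` at most `inf_{(P₀,P₁)∈𝒫₀×𝒫₁} D(P₀‖P₁)`. -/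
theorem stmt4
    {X : Type*} [MeasurableSpace X]
    (𝒫₀ 𝒫₁ : Set (Measure X))
    (h₀prob : ∀ P ∈ 𝒫₀, IsProbabilityMeasure P) (h₁prob : ∀ P ∈ 𝒫₁, IsProbabilityMeasure P)
    (h₀ne : 𝒫₀.Nonempty) (h₁ne : 𝒫₁.Nonempty)
    (α : ℝ) (hα : α ∈ Set.Ioo (0 : ℝ) 1)
    (φ : ∀ n : ℕ, (Fin n → X) → ℝ)
    (hφm : ∀ n, Measurable (φ n)) (hφ01 : ∀ n x, 0 ≤ φ n x ∧ φ n x ≤ 1)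
    (hfa : ∀ n, ∀ P₀ ∈ 𝒫₀, ∫ x, φ n x ∂(Measure.pi fun _ : Fin n => P₀) ≤ α) :
    (⨅ P₁ ∈ 𝒫₁, Filter.atTop.limsup fun n =>
        negLogRate n (∫ x, (1 - φ n x) ∂(Measure.pi fun _ : Fin n => P₁)))
      ≤ ⨅ P₀ ∈ 𝒫₀, ⨅ P₁ ∈ 𝒫₁, klDiv P₀ P₁ := by
  simp only [le_iInf_iff]
  intro P₀ hP₀ P₁ hP₁
  haveI := h₀prob P₀ hP₀
  haveI := h₁prob P₁ hP₁
  refine le_trans (iInf₂_le P₁ hP₁) ?_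
  by_cases hkl : klDiv P₀ P₁ = ⊤
  · rw [hkl]; exact le_top
  have hcond : P₀ ≪ P₁ ∧ Integrable (fun x => Real.log (P₀.rnDeriv P₁ x).toReal) P₀ := by
    by_contra hcon
    rw [klDiv, if_neg hcon] at hkl
    exact hkl rfl
  obtain ⟨hac, hint⟩ := hcond
  have hklval : klDiv P₀ P₁
      = ENNReal.ofReal (∫ x, Real.log (P₀.rnDeriv P₁ x).toReal ∂P₀) := by
    rw [klDiv, if_pos ⟨hac, hint⟩]
  set l : X → ℝ := fun y => Real.log (P₀.rnDeriv P₁ y).toReal with hl_def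
  have hlm : Measurable l :=
    Real.measurable_log.comp (Measure.measurable_rnDeriv P₀ P₁).ennreal_toReal
  set D : ℝ := ∫ x, l x ∂P₀ with hD_def
  rw [hklval]
  have key : ∀ ε : ℝ, 0 < ε →
      (Filter.atTop.limsup fun n =>
        negLogRate n (∫ x, (1 - φ n x) ∂(Measure.pi fun _ : Fin n => P₁)))
      ≤ ENNReal.ofReal (D + ε) := by
    intro ε hε
    have hα2 : (0:ℝ) < (1 - α) / 2 := by have := hα.2; simp at this ⊢; linarith [hα.2]
    have hwlln := wlln_event P₀ hlm hint (half_pos hε) hα2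
    set K : ℝ := -Real.log ((1 - α) / 2) with hK_def
    have hKlim : Tendsto (fun n : ℕ => K * (1 / (n:ℝ))) atTop (𝓝 0) := by
      simpa using tendsto_one_div_atTop_nhds_zero_nat.const_mul K
    refine Filter.limsup_le_of_le (by isBoundedDefault) ?_
    filter_upwards [hwlln, hKlim.eventually (gt_mem_nhds (half_pos hε)),
      eventually_ge_atTop 1] with n hn hKn hn1
    have hnR : (1:ℝ) ≤ (n:ℝ) := by exact_mod_cast hn1
    have hn0 : (0:ℝ) < n := by linarith
    set c : ℝ := n * (D + ε / 2) with hc_def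
    have hA' : ((Measure.pi fun _ : Fin n => P₀)
        {x | c < ∑ i, Real.log (P₀.rnDeriv P₁ (x i)).toReal}).toReal ≤ (1 - α) / 2 := by
      refine le_trans (ENNReal.toReal_mono (measure_ne_top _ _) (measure_mono ?_)) hn
      intro x hx
      rw [Set.mem_setOf_eq] at hx ⊢
      have hceq : c = (n:ℝ) * D + n * (ε / 2) := by rw [hc_def]; ring
      linarith
    have hβ := key_lb P₀ P₁ hac (hφm n) (hφ01 n) hα (hfa n P₀ hP₀) hA'
    set β : ℝ := ∫ x, (1 - φ n x) ∂(Measure.pi fun _ : Fin n => P₁) with hβ_def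
    have hβpos : 0 < β := lt_of_lt_of_le (by positivity) hβ
    rw [negLogRate, if_neg (ne_of_gt hβpos)]
    refine ENNReal.ofReal_le_ofReal ?_
    have hlogge : Real.log ((1 - α) / 2 * Real.exp (-c)) ≤ Real.log β :=
      Real.log_le_log (by positivity) hβ
    rw [Real.log_mul (ne_of_gt hα2) (Real.exp_ne_zero _), Real.log_exp] at hlogge
    have h2 : -Real.log β ≤ K + c := by rw [hK_def]; linarith
    have h1n : (0:ℝ) ≤ 1 / (n:ℝ) := by positivity
    have hcn : (1 / (n:ℝ)) * c = D + ε / 2 := by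
      rw [hc_def]; field_simp
    calc -(1 / (n:ℝ)) * Real.log β = (1 / (n:ℝ)) * (-Real.log β) := by ring
      _ ≤ (1 / (n:ℝ)) * (K + c) := mul_le_mul_of_nonneg_left h2 h1n
      _ = K * (1 / (n:ℝ)) + (1 / (n:ℝ)) * c := by ring
      _ ≤ ε / 2 + (D + ε / 2) := add_le_add hKn.le (le_of_eq hcn)
      _ = D + ε := by ring
  refine ENNReal.le_of_forall_pos_le_add fun δ hδ _ => ?_
  have hδR : (0:ℝ) < (δ:ℝ) := by exact_mod_cast hδ
  calc (Filter.atTop.limsup fun n =>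
        negLogRate n (∫ x, (1 - φ n x) ∂(Measure.pi fun _ : Fin n => P₁)))
      ≤ ENNReal.ofReal (D + δ) := key δ hδR
    _ ≤ ENNReal.ofReal D + ENNReal.ofReal δ := ENNReal.ofReal_add_le
    _ = ENNReal.ofReal D + δ := by rw [ENNReal.ofReal_coe_nnreal]
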